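/- Consider the system ė = ν, ν̇ = -k₄e - k₅ν - k₆·ν/(e + c) with positive gains k₄, k₅, k₆, constant c > 0, and initial condition with e(0) + c > 0. Then the equilibrium (e,ν) = (0,0) is asymptotically stable: every trajectory starting in {e + c > 0} with bounded initial data satisfies (e(t), ν(t)) → (0,0) as t → ∞. -/

import Mathlib

open Real Filter

private lemma myAnti {f f' : ℝ → ℝ} {s : Set ℝ} (hs : Convex ℝ s)
    (hd : ∀ t ∈ s, HasDerivAt f (f' t) t)
    (h0 : ∀ t ∈ interior s, f' t ≤ 0) : AntitoneOn f s :=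
  antitoneOn_of_deriv_nonpos hs
    (fun t ht => (hd t ht).continuousAt.continuousWithinAt)
    (fun t ht => ((hd t (interior_subset ht)).differentiableAt).differentiableWithinAt)
    (fun t ht => by rw [(hd t (interior_subset ht)).deriv]; exact h0 t ht)

private lemma myMono {f f' : ℝ → ℝ} {s : Set ℝ} (hs : Convex ℝ s)
    (hd : ∀ t ∈ s, HasDerivAt f (f' t) t)
    (h0 : ∀ t ∈ interior s, 0 ≤ f' t) : MonotoneOn f s :=
  monotoneOn_of_deriv_nonneg hs
    (fun t ht => (hd t ht).continuousAt.continuousWithinAt)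
    (fun t ht => ((hd t (interior_subset ht)).differentiableAt).differentiableWithinAt)
    (fun t ht => by rw [(hd t (interior_subset ht)).deriv]; exact h0 t ht)

private lemma hasDerivL (e ν : ℝ → ℝ) (k₄ k₅ k₆ c : ℝ)
    (he : ∀ t, HasDerivAt e (ν t) t)
    (hν : ∀ t, HasDerivAt ν (-k₄ * e t - k₅ * ν t - k₆ * ν t / (e t + c)) t)
    (t : ℝ) :
    HasDerivAt (fun t => k₄/2 * (e t)^2 + (ν t)^2/2)
      (-(k₅ * (ν t)^2) - k₆ * (ν t)^2 / (e t + c)) t := by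
  have h := (((he t).pow 2).const_mul (k₄/2)).add (((hν t).pow 2).div_const 2)
  refine h.congr_deriv ?_
  field_simp
  ring

private lemma hasDerivG (e ν : ℝ → ℝ) (k₄ k₅ k₆ c : ℝ)
    (he : ∀ t, HasDerivAt e (ν t) t)
    (hν : ∀ t, HasDerivAt ν (-k₄ * e t - k₅ * ν t - k₆ * ν t / (e t + c)) t)
    (t : ℝ) (h : e t + c ≠ 0) :
    HasDerivAt (fun t => ν t + k₅ * e t + k₆ * Real.log (e t + c))
      (-(k₄ * e t)) t := by
  have hlog : HasDerivAt (fun t => Real.log (e t + c)) (ν t / (e t + c)) t :=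
    ((he t).add_const c).log h
  have h2 := ((hν t).add ((he t).const_mul k₅)).add (hlog.const_mul k₆)
  refine h2.congr_deriv ?_
  field_simp
  ring

private lemma safety
    (e ν : ℝ → ℝ) (k₄ k₅ k₆ c : ℝ)
    (hk₄ : 0 < k₄) (hk₅ : 0 < k₅) (hk₆ : 0 < k₆) (hc : 0 < c)
    (he : ∀ t, HasDerivAt e (ν t) t)
    (hν : ∀ t, HasDerivAt ν (-k₄ * e t - k₅ * ν t - k₆ * ν t / (e t + c)) t)
    (h0 : e 0 + c > 0) :
    ∀ t, 0 ≤ t → 0 < e t + c := by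
  by_contra hcon
  push_neg at hcon
  obtain ⟨w, hw0, hwle⟩ := hcon
  have hce : Continuous e := continuous_iff_continuousAt.2 fun t => (he t).continuousAt
  set S : Set ℝ := {t | 0 ≤ t ∧ e t + c ≤ 0} with hSdef
  have hSclosed : IsClosed S := by
    have h1 : IsClosed {t : ℝ | 0 ≤ t} := isClosed_Ici
    have h2 : IsClosed {t : ℝ | e t + c ≤ 0} :=
      isClosed_le (by continuity) continuous_const
    exact h1.inter h2
  have hSne : S.Nonempty := ⟨w, hw0, hwle⟩
  have hSbdd : BddBelow S := ⟨0, fun x hx => hx.1⟩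
  set T := sInf S with hTdef
  have hTmem : T ∈ S := hSclosed.csInf_mem hSne hSbdd
  have hT0 : 0 ≤ T := hTmem.1
  have hTle : e T + c ≤ 0 := hTmem.2
  have hTpos : 0 < T := by
    rcases hT0.lt_or_eq with h | h
    · exact h
    · exfalso; rw [h] at h0; linarith
  have hIco : ∀ s ∈ Set.Ico 0 T, 0 < e s + c := by
    intro s hs
    by_contra hle
    push_neg at hle
    have : T ≤ s := csInf_le hSbdd ⟨hs.1, hle⟩
    linarith [hs.2]
  clear_value T
  -- L antitone on Icc 0 T
  set L : ℝ → ℝ := fun t => k₄/2 * (e t)^2 + (ν t)^2/2 with hLdef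
  have hL := hasDerivL e ν k₄ k₅ k₆ c he hν
  have hLanti : AntitoneOn L (Set.Icc 0 T) := by
    apply myAnti (convex_Icc 0 T) (fun t _ => hL t)
    intro t ht
    rw [interior_Icc] at ht
    have hec : 0 < e t + c := hIco t ⟨ht.1.le, ht.2⟩
    have h1 : 0 ≤ k₅ * (ν t)^2 := by positivity
    have h2 : 0 ≤ k₆ * (ν t)^2 / (e t + c) := by positivity
    linarith
  set L0 := L 0 with hL0def
  have hL0nn : 0 ≤ L0 := by
    have h9 : 0 ≤ k₄/2 * (e 0)^2 + (ν 0)^2/2 := by positivity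
    rw [hL0def, hLdef]; exact h9
  clear_value L0
  set B := Real.sqrt (2*L0) with hBdef
  set E := Real.sqrt (2*L0/k₄) with hEdef
  have hbound : ∀ s ∈ Set.Ico 0 T, |ν s| ≤ B ∧ |e s| ≤ E := by
    intro s hs
    have hLs : L s ≤ L0 := by
      rw [hL0def]
      exact hLanti (Set.mem_Icc.2 ⟨le_rfl, hT0⟩) (Set.mem_Icc.2 ⟨hs.1, hs.2.le⟩) hs.1
    have hν2 : (ν s)^2 ≤ 2*L0 := by
      have : 0 ≤ k₄/2 * (e s)^2 := by positivity
      simp only [hLdef] at hLs; linarith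
    have he2 : (e s)^2 ≤ 2*L0/k₄ := by
      have h3 : 0 ≤ (ν s)^2/2 := by positivity
      simp only [hLdef] at hLs
      rw [le_div_iff₀ hk₄]; nlinarith
    constructor
    · rw [hBdef, ← Real.sqrt_sq_eq_abs]; exact Real.sqrt_le_sqrt hν2
    · rw [hEdef, ← Real.sqrt_sq_eq_abs]; exact Real.sqrt_le_sqrt he2
  have hBnn : 0 ≤ B := Real.sqrt_nonneg _
  have hEnn : 0 ≤ E := Real.sqrt_nonneg _
  clear_value B E
  -- G bounded below on Ico 0 T
  set G : ℝ → ℝ := fun t => ν t + k₅ * e t + k₆ * Real.log (e t + c) with hGdef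
  have hGmono : MonotoneOn (fun t => G t + k₄*E*t) (Set.Ico 0 T) := by
    apply myMono (convex_Ico 0 T)
      (f' := fun t => -(k₄ * e t) + k₄*E)
    · intro t ht
      have hid : HasDerivAt (fun y : ℝ => k₄*E*y) (k₄*E) t := by
        simpa using (hasDerivAt_id t).const_mul (k₄*E)
      exact (hasDerivG e ν k₄ k₅ k₆ c he hν t (ne_of_gt (hIco t ht))).add hid
    · intro t ht
      rw [interior_Ico] at ht
      have := (hbound t ⟨ht.1.le, ht.2⟩).2
      have he1 : e t ≤ E := le_of_abs_le this
      nlinarith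
  set δ := Real.exp ((G 0 - k₄*E*T - B - k₅*E)/k₆) with hδdef
  have hδpos : 0 < δ := Real.exp_pos _
  -- keep δ value for hδle
  have hδle : ∀ s ∈ Set.Ico 0 T, δ ≤ e s + c := by
    intro s hs
    have h1 : G 0 + k₄*E*0 ≤ G s + k₄*E*s :=
      hGmono (Set.mem_Ico.2 ⟨le_rfl, hTpos⟩) hs hs.1
    have h2 : k₄*E*s ≤ k₄*E*T := by
      have : 0 ≤ k₄*E := by positivity
      exact mul_le_mul_of_nonneg_left hs.2.le this
    obtain ⟨hb1, hb2⟩ := hbound s hs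
    have hν1 : ν s ≤ B := le_of_abs_le hb1
    have he1 : e s ≤ E := le_of_abs_le hb2
    have hlogge : (G 0 - k₄*E*T - B - k₅*E)/k₆ ≤ Real.log (e s + c) := by
      rw [div_le_iff₀ hk₆]
      have : k₆ * Real.log (e s + c) = G s - ν s - k₅ * e s := by
        simp only [hGdef]; ring
      nlinarith
    calc δ ≤ Real.exp (Real.log (e s + c)) := Real.exp_le_exp.2 hlogge
      _ = e s + c := Real.exp_log (hIco s hs)
  -- contradiction at T
  have hlim : Tendsto (fun s => e s + c) (nhdsWithin T (Set.Ico 0 T)) (nhds (e T + c)) :=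
    ((hce.add continuous_const).tendsto T).mono_left nhdsWithin_le_nhds
  have hne : (nhdsWithin T (Set.Ico 0 T)).NeBot := by
    rw [← mem_closure_iff_nhdsWithin_neBot, closure_Ico (ne_of_lt hTpos)]
    exact Set.mem_Icc.2 ⟨hT0, le_rfl⟩
  have : δ ≤ e T + c :=
    ge_of_tendsto hlim (eventually_mem_nhdsWithin.mono fun s hs => hδle s hs)
  linarith

set_option maxHeartbeats 2000000 in
/-- Asymptotic stability of the longitudinal platoon error dynamics with
constructive barrier feedback: every trajectory of ė = ν,
ν̇ = -k₄e - k₅ν - k₆ν/(e+c) starting with e(0) + c > 0 converges to (0,0). -/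
theorem stmt_4
    (e ν : ℝ → ℝ) (k₄ k₅ k₆ c : ℝ)
    (hk₄ : 0 < k₄) (hk₅ : 0 < k₅) (hk₆ : 0 < k₆) (hc : 0 < c)
    (he : ∀ t, HasDerivAt e (ν t) t)
    (hν : ∀ t, HasDerivAt ν
      (-k₄ * e t - k₅ * ν t - k₆ * ν t / (e t + c)) t)
    (h0 : e 0 + c > 0) :
    Tendsto (fun t => (e t, ν t)) atTop (nhds (0, 0)) := by
  have hEC : ∀ t, 0 ≤ t → 0 < e t + c := safety e ν k₄ k₅ k₆ c hk₄ hk₅ hk₆ hc he hν h0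
  have hce : Continuous e := continuous_iff_continuousAt.2 fun t => (he t).continuousAt
  obtain ⟨L, hLdef⟩ : ∃ L : ℝ → ℝ, L = fun t => k₄/2 * (e t)^2 + (ν t)^2/2 := ⟨_, rfl⟩
  have hL : ∀ t, HasDerivAt L (-(k₅ * (ν t)^2) - k₆ * (ν t)^2 / (e t + c)) t := by
    intro t
    rw [hLdef]
    exact hasDerivL e ν k₄ k₅ k₆ c he hν t
  have hLnn : ∀ t, 0 ≤ L t := by
    intro t; simp only [hLdef]; positivity
  have hLanti : AntitoneOn L (Set.Ici 0) := by
    apply myAnti (convex_Ici 0) (fun t _ => hL t)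
    intro t ht
    rw [interior_Ici] at ht
    have hec := hEC t ht.le
    have h1 : 0 ≤ k₅ * (ν t)^2 := by positivity
    have h2 : 0 ≤ k₆ * (ν t)^2 / (e t + c) := by positivity
    linarith
  have key : ∀ ε, 0 < ε → ∃ T, 0 ≤ T ∧ L T < ε := by
    intro ε hε
    by_contra hcon
    push_neg at hcon
    -- hcon : ∀ T, 0 ≤ T → ε ≤ L T
    obtain ⟨L0, hL0⟩ : ∃ x : ℝ, x = L 0 := ⟨_, rfl⟩
    have hεL0 : ε ≤ L0 := by rw [hL0]; exact hcon 0 le_rfl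
    obtain ⟨B, hBdef⟩ : ∃ x : ℝ, x = Real.sqrt (2 * L0) := ⟨_, rfl⟩
    obtain ⟨E, hEdef⟩ : ∃ x : ℝ, x = Real.sqrt (2 * L0 / k₄) := ⟨_, rfl⟩
    have hBpos : 0 < B := by
      rw [hBdef]; apply Real.sqrt_pos.2; linarith
    have hEnn : 0 ≤ E := by rw [hEdef]; exact Real.sqrt_nonneg _
    have hbound : ∀ t, 0 ≤ t → |ν t| ≤ B ∧ |e t| ≤ E := by
      intro t ht
      have hLs : L t ≤ L0 := by
        rw [hL0]
        exact hLanti (Set.mem_Ici.2 le_rfl) (Set.mem_Ici.2 ht) ht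
      rw [hLdef] at hLs
      simp only at hLs
      constructor
      · rw [hBdef, ← Real.sqrt_sq_eq_abs]
        apply Real.sqrt_le_sqrt
        nlinarith [mul_nonneg hk₄.le (sq_nonneg (e t))]
      · rw [hEdef, ← Real.sqrt_sq_eq_abs]
        apply Real.sqrt_le_sqrt
        rw [le_div_iff₀ hk₄]
        nlinarith [sq_nonneg (ν t)]
    obtain ⟨η, hηdef⟩ : ∃ x : ℝ, x = Real.sqrt (ε/(4*k₄)) := ⟨_, rfl⟩
    have hηpos : 0 < η := by
      rw [hηdef]; apply Real.sqrt_pos.2; positivity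
    have hη2 : k₄ * (2*η)^2 ≤ ε := by
      have hs2 : η^2 = ε/(4*k₄) := by
        rw [hηdef]; exact Real.sq_sqrt (by positivity)
      have h2 : 4*k₄*(ε/(4*k₄)) = ε := by field_simp
      nlinarith [hs2, h2]
    have hνlow : ∀ t, 0 ≤ t → |e t| ≤ 2*η → ε ≤ (ν t)^2 := by
      intro t ht habs
      have h1 := hcon t ht
      rw [hLdef] at h1
      simp only at h1
      have h2 : (e t)^2 ≤ (2*η)^2 := by
        have h2a := abs_le.1 habs
        nlinarith [h2a.1, h2a.2]
      have h3 : k₄ * (e t)^2 ≤ k₄ * (2*η)^2 := mul_le_mul_of_nonneg_left h2 hk₄.le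
      nlinarith
    have hlip : ∀ s t, 0 ≤ s → s ≤ t → |e t - e s| ≤ B * (t - s) := by
      intro s t hs hst
      have hm1 : MonotoneOn (fun u => B*u - e u) (Set.Ici 0) := by
        apply myMono (convex_Ici 0) (f' := fun u => B - ν u)
        · intro u _
          have hid : HasDerivAt (fun y : ℝ => B*y) B u := by
            simpa using (hasDerivAt_id u).const_mul B
          exact hid.sub (he u)
        · intro u hu
          rw [interior_Ici] at hu
          have := le_of_abs_le (hbound u hu.le).1
          linarith
      have hm2 : MonotoneOn (fun u => B*u + e u) (Set.Ici 0) := by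
        apply myMono (convex_Ici 0) (f' := fun u => B + ν u)
        · intro u _
          have hid : HasDerivAt (fun y : ℝ => B*y) B u := by
            simpa using (hasDerivAt_id u).const_mul B
          exact hid.add (he u)
        · intro u hu
          rw [interior_Ici] at hu
          have := neg_le_of_abs_le (hbound u hu.le).1
          linarith
      have h1 := hm1 (Set.mem_Ici.2 hs) (Set.mem_Ici.2 (hs.trans hst)) hst
      have h2 := hm2 (Set.mem_Ici.2 hs) (Set.mem_Ici.2 (hs.trans hst)) hst
      simp only at h1 h2
      rw [abs_le]
      constructor <;> nlinarith
    by_cases hfreq : ∀ T, 0 ≤ T → ∃ t, T ≤ t ∧ |e t| ≤ η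
    · -- infinitely many visits: L decreases by d each visit
      obtain ⟨d, hddef⟩ : ∃ x : ℝ, x = k₅ * ε * (η/B) := ⟨_, rfl⟩
      have hdpos : 0 < d := by rw [hddef]; positivity
      have step : ∀ n : ℕ, ∃ t, 0 ≤ t ∧ L t ≤ L0 - n * d := by
        intro n
        induction n with
        | zero =>
          refine ⟨0, le_rfl, ?_⟩
          rw [hL0]; push_cast; simp
        | succ n ih =>
          obtain ⟨t, ht0, htL⟩ := ih
          obtain ⟨s, hts, hsη⟩ := hfreq t ht0
          have hs0 : 0 ≤ s := ht0.trans hts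
          have hstep : 0 < η/B := by positivity
          have hνε : ∀ u, u ∈ Set.Icc s (s + η/B) → ε ≤ (ν u)^2 := by
            intro u hu
            apply hνlow u (hs0.trans hu.1)
            have h4 := hlip s u hs0 hu.1
            have h5 : B * (u - s) ≤ η := by
              have h5a : u - s ≤ η/B := by linarith [hu.2]
              have h5b : B*(u-s) ≤ B*(η/B) := mul_le_mul_of_nonneg_left h5a hBpos.le
              have h5c : B*(η/B) = η := by field_simp
              linarith
            have h6 : |e u| ≤ |e s| + |e u - e s| := by
              calc |e u| = |e s + (e u - e s)| := by ring_nf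
                _ ≤ |e s| + |e u - e s| := abs_add_le _ _
            linarith
          have hanti2 : AntitoneOn (fun u => L u + (k₅*ε)*u) (Set.Icc s (s+η/B)) := by
            apply myAnti (convex_Icc _ _)
              (f' := fun u => (-(k₅ * (ν u)^2) - k₆ * (ν u)^2/(e u + c)) + k₅*ε)
            · intro u _
              have hid : HasDerivAt (fun y : ℝ => (k₅*ε)*y) (k₅*ε) u := by
                simpa using (hasDerivAt_id u).const_mul (k₅*ε)
              exact (hL u).add hid
            · intro u hu
              rw [interior_Icc] at hu
              have h7 := hνε u ⟨hu.1.le, hu.2.le⟩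
              have hec := hEC u (hs0.trans hu.1.le)
              have h8 : 0 ≤ k₆ * (ν u)^2/(e u + c) := by positivity
              nlinarith [mul_le_mul_of_nonneg_left h7 hk₅.le]
          have hmem1 : s ∈ Set.Icc s (s+η/B) := ⟨le_rfl, by linarith⟩
          have hmem2 : s + η/B ∈ Set.Icc s (s+η/B) := ⟨by linarith, le_rfl⟩
          have h9 := hanti2 hmem1 hmem2 (by linarith)
          simp only at h9
          have h10 : L s ≤ L t := hLanti (Set.mem_Ici.2 ht0) (Set.mem_Ici.2 hs0) hts
          have hexp : (k₅*ε)*(s+η/B) = (k₅*ε)*s + d := by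
            rw [hddef]; ring
          refine ⟨s + η/B, by linarith, ?_⟩
          push_cast
          push_cast at htL
          linarith
      obtain ⟨n, hn⟩ := exists_nat_gt (L0 / d)
      obtain ⟨t, ht0, htL⟩ := step n
      have h11 : L0 < n * d := by rwa [div_lt_iff₀ hdpos] at hn
      have h12 := hcon t ht0
      have h13 : L t ≤ L0 := by
        rw [hL0]
        exact hLanti (Set.mem_Ici.2 le_rfl) (Set.mem_Ici.2 ht0) ht0
      linarith
    · -- eventually |e| > η
      push_neg at hfreq
      obtain ⟨T, hT0, hTe⟩ := hfreq
      have hsign : (∀ t, T ≤ t → η < e t) ∨ (∀ t, T ≤ t → e t < -η) := by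
        rcases lt_abs.1 (hTe T le_rfl) with h | h
        · left
          intro t ht
          by_contra hle
          push_neg at hle
          have h2 : e t < -η := by
            rcases lt_abs.1 (hTe t ht) with h' | h'
            · linarith
            · linarith
          have hmem : (0:ℝ) ∈ Set.Icc (e t) (e T) := ⟨by linarith, by linarith⟩
          obtain ⟨u, hu, heu⟩ := intermediate_value_Icc' ht hce.continuousOn hmem
          have h3 := hTe u hu.1
          rw [heu] at h3
          simp at h3
          linarith
        · right
          intro t ht
          by_contra hle
          push_neg at hle
          have h2 : η < e t := by
            rcases lt_abs.1 (hTe t ht) with h' | h'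
            · linarith
            · linarith
          have hmem : (0:ℝ) ∈ Set.Icc (e T) (e t) := ⟨by linarith, by linarith⟩
          obtain ⟨u, hu, heu⟩ := intermediate_value_Icc ht hce.continuousOn hmem
          have h3 := hTe u hu.1
          rw [heu] at h3
          simp at h3
          linarith
      obtain ⟨G, hGdef⟩ : ∃ G : ℝ → ℝ, G = fun t => ν t + k₅ * e t + k₆ * Real.log (e t + c) :=
        ⟨_, rfl⟩
      have hG : ∀ t, 0 ≤ t → HasDerivAt G (-(k₄ * e t)) t := by
        intro t ht
        rw [hGdef]
        exact hasDerivG e ν k₄ k₅ k₆ c he hν t (ne_of_gt (hEC t ht))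
      have hkη : 0 < k₄*η := by positivity
      rcases hsign with hppos | hneg
      · -- Case A : e ≥ η eventually
        have hanti3 : AntitoneOn (fun t => G t + (k₄*η)*t) (Set.Ici T) := by
          apply myAnti (convex_Ici T) (f' := fun t => -(k₄ * e t) + k₄*η)
          · intro t ht
            have hid : HasDerivAt (fun y : ℝ => (k₄*η)*y) (k₄*η) t := by
              simpa using (hasDerivAt_id t).const_mul (k₄*η)
            exact (hG t (hT0.trans ht)).add hid
          · intro t ht
            rw [interior_Ici] at ht
            have := hppos t ht.le
            nlinarith
        have hGlb : ∀ t, T ≤ t → -B - k₅*E + k₆*Real.log (η+c) ≤ G t := by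
          intro t ht
          have ht0' : 0 ≤ t := hT0.trans ht
          obtain ⟨hb1, hb2⟩ := hbound t ht0'
          have h1 : -B ≤ ν t := neg_le_of_abs_le hb1
          have h2' : -E ≤ e t := neg_le_of_abs_le hb2
          have h3 : Real.log (η+c) ≤ Real.log (e t + c) :=
            Real.log_le_log (by positivity) (by linarith [hppos t ht])
          have h4 : k₆ * Real.log (η+c) ≤ k₆ * Real.log (e t + c) :=
            mul_le_mul_of_nonneg_left h3 hk₆.le
          have h5 : -(k₅*E) ≤ k₅ * e t := by nlinarith
          simp only [hGdef]
          linarith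
        obtain ⟨X, hXdef⟩ : ∃ x : ℝ, x = G T + B + k₅*E - k₆*Real.log (η+c) + 1 := ⟨_, rfl⟩
        have hX1 : 1 ≤ X := by
          have := hGlb T le_rfl
          rw [hXdef]; linarith
        obtain ⟨t₁, ht₁def⟩ : ∃ x : ℝ, x = T + X/(k₄*η) := ⟨_, rfl⟩
        have ht₁ : T ≤ t₁ := by
          rw [ht₁def]
          have : 0 ≤ X/(k₄*η) := by positivity
          linarith
        have h6 := hanti3 (Set.mem_Ici.2 le_rfl) (Set.mem_Ici.2 ht₁) ht₁
        simp only at h6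
        have h7 : (k₄*η) * t₁ = (k₄*η)*T + X := by
          rw [ht₁def]; field_simp
        have h8 := hGlb t₁ ht₁
        rw [hXdef] at h7
        linarith
      · -- Case B : e ≤ -η eventually
        have hanti4 : AntitoneOn (fun t => (k₄*η)*t - G t) (Set.Ici T) := by
          apply myAnti (convex_Ici T) (f' := fun t => k₄*η - -(k₄ * e t))
          · intro t ht
            have hid : HasDerivAt (fun y : ℝ => (k₄*η)*y) (k₄*η) t := by
              simpa using (hasDerivAt_id t).const_mul (k₄*η)
            exact hid.sub (hG t (hT0.trans ht))
          · intro t ht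
            rw [interior_Ici] at ht
            have := hneg t ht.le
            nlinarith
        have hGub : ∀ t, 0 ≤ t → G t ≤ B + k₅*E + k₆*Real.log (E+c) := by
          intro t ht0'
          obtain ⟨hb1, hb2⟩ := hbound t ht0'
          have h1 : ν t ≤ B := le_of_abs_le hb1
          have h2 : e t ≤ E := le_of_abs_le hb2
          have h3 : Real.log (e t + c) ≤ Real.log (E+c) :=
            Real.log_le_log (hEC t ht0') (by linarith)
          have h4 : k₆ * Real.log (e t + c) ≤ k₆ * Real.log (E+c) :=
            mul_le_mul_of_nonneg_left h3 hk₆.le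
          have h5 : k₅ * e t ≤ k₅*E := by nlinarith
          simp only [hGdef]
          linarith
        obtain ⟨X, hXdef⟩ : ∃ x : ℝ, x = B + k₅*E + k₆*Real.log (E+c) - G T + 1 := ⟨_, rfl⟩
        have hX1 : 1 ≤ X := by
          have := hGub T hT0
          rw [hXdef]; linarith
        obtain ⟨t₁, ht₁def⟩ : ∃ x : ℝ, x = T + X/(k₄*η) := ⟨_, rfl⟩
        have ht₁ : T ≤ t₁ := by
          rw [ht₁def]
          have : 0 ≤ X/(k₄*η) := by positivity
          linarith
        have h6 := hanti4 (Set.mem_Ici.2 le_rfl) (Set.mem_Ici.2 ht₁) ht₁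
        simp only at h6
        have h7 : (k₄*η) * t₁ = (k₄*η)*T + X := by
          rw [ht₁def]; field_simp
        have h8 := hGub t₁ (hT0.trans ht₁)
        rw [hXdef] at h7
        linarith
  -- L tends to 0
  have hLtend : Tendsto L atTop (nhds 0) := by
    rw [tendsto_order]
    constructor
    · intro a ha
      exact eventually_atTop.2 ⟨0, fun t _ => lt_of_lt_of_le ha (hLnn t)⟩
    · intro a ha
      obtain ⟨T, hT0, hTL⟩ := key a ha
      exact eventually_atTop.2 ⟨T, fun t ht =>
        lt_of_le_of_lt (hLanti (Set.mem_Ici.2 hT0) (Set.mem_Ici.2 (hT0.trans ht)) ht) hTL⟩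
  -- squeeze
  have heb : ∀ t, |e t| ≤ Real.sqrt (2 * L t / k₄) := by
    intro t
    rw [← Real.sqrt_sq_eq_abs]
    apply Real.sqrt_le_sqrt
    rw [le_div_iff₀ hk₄, hLdef]
    simp only
    nlinarith [sq_nonneg (ν t)]
  have hνb : ∀ t, |ν t| ≤ Real.sqrt (2 * L t) := by
    intro t
    rw [← Real.sqrt_sq_eq_abs]
    apply Real.sqrt_le_sqrt
    rw [hLdef]
    simp only
    nlinarith [mul_nonneg hk₄.le (sq_nonneg (e t))]
  have hsq1 : Tendsto (fun t => Real.sqrt (2 * L t / k₄)) atTop (nhds 0) := by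
    have h1 : Tendsto (fun t => 2 * L t / k₄) atTop (nhds 0) := by
      have := (hLtend.const_mul 2).div_const k₄
      simpa using this
    have h2 := (Real.continuous_sqrt.tendsto 0).comp h1
    rw [Real.sqrt_zero] at h2
    exact h2
  have hsq2 : Tendsto (fun t => Real.sqrt (2 * L t)) atTop (nhds 0) := by
    have h1 : Tendsto (fun t => 2 * L t) atTop (nhds 0) := by
      have := hLtend.const_mul 2
      simpa using this
    have h2 := (Real.continuous_sqrt.tendsto 0).comp h1
    rw [Real.sqrt_zero] at h2
    exact h2
  have hneg1 : Tendsto (fun t => -Real.sqrt (2 * L t / k₄)) atTop (nhds 0) := by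
    rw [show (0:ℝ) = -0 by norm_num]
    exact hsq1.neg
  have hneg2 : Tendsto (fun t => -Real.sqrt (2 * L t)) atTop (nhds 0) := by
    rw [show (0:ℝ) = -0 by norm_num]
    exact hsq2.neg
  have htende : Tendsto e atTop (nhds 0) :=
    tendsto_of_tendsto_of_tendsto_of_le_of_le hneg1 hsq1
      (fun t => (abs_le.1 (heb t)).1) (fun t => (abs_le.1 (heb t)).2)
  have htendν : Tendsto ν atTop (nhds 0) :=
    tendsto_of_tendsto_of_tendsto_of_le_of_le hneg2 hsq2
      (fun t => (abs_le.1 (hνb t)).1) (fun t => (abs_le.1 (hνb t)).2)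
  exact htende.prodMk_nhds htendν
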